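/- Let μ be a nonzero positive finite Borel measure on [0,1], let M := max supp μ be the largest point of its support, and for R > 0 and θ ∈ [−π,π] set Φ(R·e^{iθ}) := ∫₀¹ R^α e^{iαθ} dμ(α). Then for every ε > 0 there exists R₀ > 0 such that |Φ(R·e^{iθ}) − μ({M})·R^M·e^{iMθ}| ≤ ε·R^M for all R ≥ R₀ and all θ ∈ [−π,π]. (In particular, if μ has no atom at M then Φ(s) = o(|s|^M) as |s| → ∞, uniformly in the argument.) -/

import Mathlib

open MeasureTheory Complex Set

/-- `PhiP μ R θ = ∫₀¹ R^α e^{iαθ} dμ(α)` (polar form, including boundary values θ = ±π). -/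
noncomputable def PhiP (μ : Measure ℝ) (R θ : ℝ) : ℂ :=
  ∫ α in Set.Icc (0:ℝ) 1, ((R ^ α : ℝ) : ℂ) * Complex.exp ((α * θ : ℝ) * Complex.I) ∂μ

/-- `M` is the largest point of the support of the measure `μ` (supported in `[0,1]`). -/
def IsMaxSupport (μ : Measure ℝ) (M : ℝ) : Prop :=
  M ∈ Set.Icc (0:ℝ) 1 ∧ μ (Set.Ioi M) = 0 ∧ ∀ ε > 0, 0 < μ (Set.Icc (M - ε) M)

theorem stmt_1 (μ : Measure ℝ) [IsFiniteMeasure μ] (hμ : μ ≠ 0)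
    (hsupp : μ (Set.Icc (0:ℝ) 1)ᶜ = 0) (M : ℝ) (hM : IsMaxSupport μ M) :
    ∀ ε > 0, ∃ R₀ > 0, ∀ R ≥ R₀, ∀ θ ∈ Set.Icc (-Real.pi) Real.pi,
      ‖PhiP μ R θ -
          ((μ {M}).toReal : ℂ) * ((R ^ M : ℝ) : ℂ) * Complex.exp ((M * θ : ℝ) * Complex.I)‖
        ≤ ε * R ^ M := by
  intro ε hε
  obtain ⟨hM01, hIoi, _⟩ := hM
  set T : ℝ := (μ (Set.Icc (0:ℝ) 1)).toReal with hT
  -- Step 1: find δ > 0 with μ (Ioo (M-δ) M) small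
  have hsmall : ∃ δ > 0, (μ (Set.Ioo (M - δ) M)).toReal ≤ ε / 2 := by
    set s : ℕ → Set ℝ := fun n => Set.Ioo (M - 1 / (n + 1)) M with hs
    have hanti : Antitone s := by
      intro n m hnm
      apply Set.Ioo_subset_Ioo_left
      have : (1 : ℝ) / (m + 1) ≤ 1 / (n + 1) := by
        apply one_div_le_one_div_of_le (by positivity)
        linarith [(Nat.cast_le (α := ℝ)).2 hnm]
      linarith
    have hinter : ⋂ n, s n = ∅ := by
      ext x
      simp only [Set.mem_iInter, Set.mem_empty_iff_false, iff_false, not_forall]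
      by_cases hx : x < M
      · obtain ⟨n, hn⟩ := exists_nat_one_div_lt (sub_pos.2 hx)
        refine ⟨n, ?_⟩
        simp only [hs, Set.mem_Ioo, not_and, not_lt]
        intro h
        linarith
      · exact ⟨0, by simp [hs, Set.mem_Ioo]; intro h; linarith⟩
    have htend : Filter.Tendsto (μ ∘ s) Filter.atTop (nhds 0) := by
      have := tendsto_measure_iInter_atTop (μ := μ) (s := s)
        (fun n => (measurableSet_Ioo).nullMeasurableSet) hanti
        ⟨0, measure_ne_top μ _⟩
      rwa [hinter, measure_empty] at this
    have htendr : Filter.Tendsto (fun n => (μ (s n)).toReal) Filter.atTop (nhds 0) := by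
      have h0 : ((0 : ENNReal)).toReal = 0 := rfl
      exact h0 ▸ (ENNReal.tendsto_toReal (by simp)).comp htend
    have := htendr.eventually_le_const (show (0:ℝ) < ε / 2 by linarith)
    obtain ⟨n, hn⟩ := this.exists
    exact ⟨1 / (n + 1), by positivity, hn⟩
  obtain ⟨δ, hδ, hδμ⟩ := hsmall
  -- Step 2: choose R₀
  have htail : Filter.Tendsto (fun R : ℝ => R ^ (-δ) * T) Filter.atTop (nhds 0) := by
    simpa using (tendsto_rpow_neg_atTop hδ).mul_const T
  have hev : ∀ᶠ R : ℝ in Filter.atTop, R ^ (-δ) * T ≤ ε / 2 ∧ 1 ≤ R := by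
    filter_upwards [htail.eventually_le_const (show (0:ℝ) < ε / 2 by linarith),
      Filter.eventually_ge_atTop (1 : ℝ)] with R h1 h2 using ⟨h1, h2⟩
  obtain ⟨R₀, hR₀⟩ := Filter.eventually_atTop.mp hev
  refine ⟨max R₀ 1, lt_of_lt_of_le one_pos (le_max_right _ _), ?_⟩
  intro R hR θ hθ
  obtain ⟨htail', hR1⟩ := hR₀ R (le_trans (le_max_left _ _) hR)
  have hRpos : (0:ℝ) < R := lt_of_lt_of_le one_pos (le_trans (le_max_right _ _) hR)
  -- the integrand
  set f : ℝ → ℂ := fun α => ((R ^ α : ℝ) : ℂ) * Complex.exp ((α * θ : ℝ) * Complex.I) with hf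
  have hfc : Continuous f := by
    have h1 : Continuous fun α : ℝ => (R ^ α : ℝ) := by
      have : (fun α : ℝ => (R ^ α : ℝ)) = fun α => Real.exp (Real.log R * α) := by
        funext α
        rw [Real.rpow_def_of_pos hRpos, mul_comm]
      rw [this]; exact Real.continuous_exp.comp (continuous_const.mul continuous_id)
    exact (Complex.continuous_ofReal.comp h1).mul
      (Complex.continuous_exp.comp ((Complex.continuous_ofReal.comp
        (continuous_id.mul continuous_const)).mul continuous_const))
  have hnorm : ∀ α, ‖f α‖ = R ^ α := by
    intro α
    rw [hf]
    simp only [norm_mul, Complex.norm_real, Complex.norm_exp_ofReal_mul_I, Real.norm_eq_abs,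
      mul_one]
    exact abs_of_nonneg (Real.rpow_nonneg hRpos.le α)
  have hfint : IntegrableOn f (Set.Icc (0:ℝ) 1) μ := hfc.integrableOn_Icc
  have hMmem : M ∈ Set.Icc (0:ℝ) 1 := hM01
  -- singleton integral
  have hsing : ∫ α in ({M} : Set ℝ), f α ∂μ = (μ {M}).toReal • f M := by
    have h1 : ∫ α in ({M} : Set ℝ), f α ∂μ = ∫ _ in ({M} : Set ℝ), f M ∂μ :=
      setIntegral_congr_fun (measurableSet_singleton M)
        (fun x hx => by rw [Set.mem_singleton_iff.1 hx])
    rw [h1, setIntegral_const, measureReal_def]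
  -- decomposition
  have hdecomp : ∫ α in Set.Icc (0:ℝ) 1, f α ∂μ
      = (∫ α in Set.Icc (0:ℝ) 1 \ {M}, f α ∂μ) + ∫ α in ({M} : Set ℝ), f α ∂μ := by
    rw [← MeasureTheory.setIntegral_union (Set.disjoint_sdiff_left) (measurableSet_singleton M)
      (hfint.mono_set Set.diff_subset)
      (hfint.mono_set (Set.singleton_subset_iff.2 hMmem)),
      Set.diff_union_of_subset (Set.singleton_subset_iff.2 hMmem)]
  have key : PhiP μ R θ -
      ((μ {M}).toReal : ℂ) * ((R ^ M : ℝ) : ℂ) * Complex.exp ((M * θ : ℝ) * Complex.I)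
      = ∫ α in Set.Icc (0:ℝ) 1 \ {M}, f α ∂μ := by
    rw [PhiP, hdecomp, hsing, hf, Complex.real_smul]
    push_cast
    ring
  rw [key]
  -- bound the norm of the integral
  have hstep1 : ‖∫ α in Set.Icc (0:ℝ) 1 \ {M}, f α ∂μ‖
      ≤ ∫ α in Set.Icc (0:ℝ) 1 \ {M}, R ^ α ∂μ := by
    calc ‖∫ α in Set.Icc (0:ℝ) 1 \ {M}, f α ∂μ‖
        ≤ ∫ α in Set.Icc (0:ℝ) 1 \ {M}, ‖f α‖ ∂μ := norm_integral_le_integral_norm _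
      _ = ∫ α in Set.Icc (0:ℝ) 1 \ {M}, R ^ α ∂μ := by
          exact integral_congr_ae (Filter.Eventually.of_forall fun α => hnorm α)
  -- the real-valued integrand is continuous and nonneg
  have hgc : Continuous fun α : ℝ => (R ^ α : ℝ) := by
    have : (fun α : ℝ => (R ^ α : ℝ)) = fun α => Real.exp (Real.log R * α) := by
      funext α; rw [Real.rpow_def_of_pos hRpos, mul_comm]
    rw [this]; exact Real.continuous_exp.comp (continuous_const.mul continuous_id)
  set A : Set ℝ := Set.Icc 0 (M - δ) with hA
  set B : Set ℝ := Set.Ioo (M - δ) M with hB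
  have hgintAB : IntegrableOn (fun α : ℝ => (R ^ α : ℝ)) (A ∪ B) μ := by
    refine (hgc.integrableOn_Icc (a := 0) (b := M - δ)).union ?_
    exact (hgc.integrableOn_Icc (a := M - δ) (b := M)).mono_set Set.Ioo_subset_Icc_self
  have hgintABI : IntegrableOn (fun α : ℝ => (R ^ α : ℝ)) (A ∪ B ∪ Set.Ioi M) μ := by
    refine hgintAB.union ?_
    rw [IntegrableOn, Measure.restrict_eq_zero.2 hIoi]
    exact integrable_zero_measure
  have hsub : Set.Icc (0:ℝ) 1 \ {M} ⊆ A ∪ B ∪ Set.Ioi M := by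
    intro x hx
    obtain ⟨⟨hx0, hx1⟩, hxM⟩ := hx
    rcases lt_trichotomy x M with h | h | h
    · rcases le_or_gt x (M - δ) with h' | h'
      · exact Or.inl (Or.inl ⟨hx0, h'⟩)
      · exact Or.inl (Or.inr ⟨h', h⟩)
    · exact absurd h hxM
    · exact Or.inr h
  have hstep2 : ∫ α in Set.Icc (0:ℝ) 1 \ {M}, R ^ α ∂μ
      ≤ ∫ α in A ∪ B ∪ Set.Ioi M, R ^ α ∂μ := by
    refine setIntegral_mono_set hgintABI
      (Filter.Eventually.of_forall fun α => Real.rpow_nonneg hRpos.le α)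
      (HasSubset.Subset.eventuallyLE hsub)
  have hstep3 : ∫ α in A ∪ B ∪ Set.Ioi M, R ^ α ∂μ = ∫ α in A ∪ B, R ^ α ∂μ := by
    apply setIntegral_congr_set
    rw [MeasureTheory.ae_eq_set]
    constructor
    · refine measure_mono_null ?_ hIoi
      rintro x ⟨hx1 | hx2, hx3⟩
      · exact absurd hx1 hx3
      · exact hx2
    · refine measure_mono_null ?_ (measure_empty (μ := μ))
      rintro x ⟨hx1, hx2⟩
      exact absurd (Or.inl hx1) hx2
  have hABdisj : Disjoint A B := by
    apply Set.disjoint_left.2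
    rintro x ⟨_, hx2⟩ ⟨hx3, _⟩
    linarith
  have hstep4 : ∫ α in A ∪ B, R ^ α ∂μ = (∫ α in A, R ^ α ∂μ) + ∫ α in B, R ^ α ∂μ := by
    exact MeasureTheory.setIntegral_union hABdisj measurableSet_Ioo
      (hgintAB.mono_set Set.subset_union_left) (hgintAB.mono_set Set.subset_union_right)
  -- bound each piece
  have hRδ : R ^ (M - δ) = R ^ M * R ^ (-δ) := by
    rw [← Real.rpow_add hRpos]; ring_nf
  have hboundA : ∫ α in A, R ^ α ∂μ ≤ R ^ M * (ε / 2) := by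
    have h1 : ∫ α in A, R ^ α ∂μ ≤ ∫ _ in A, R ^ (M - δ) ∂μ := by
      refine setIntegral_mono_on (hgintAB.mono_set Set.subset_union_left)
        (integrableOn_const (measure_ne_top μ A)) measurableSet_Icc ?_
      intro x hx
      exact Real.rpow_le_rpow_of_exponent_le hR1 hx.2
    have h2 : ∫ _ in A, R ^ (M - δ) ∂μ = (μ A).toReal * R ^ (M - δ) := by
      rw [setIntegral_const, smul_eq_mul, measureReal_def]
    have h3 : (μ A).toReal ≤ T := by
      apply ENNReal.toReal_mono (measure_ne_top μ _)
      apply measure_mono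
      intro x hx
      exact ⟨hx.1, le_trans hx.2 (by linarith [hM01.2, hδ])⟩
    calc ∫ α in A, R ^ α ∂μ ≤ (μ A).toReal * R ^ (M - δ) := by rw [← h2]; exact h1
      _ ≤ T * R ^ (M - δ) := by
          apply mul_le_mul_of_nonneg_right h3 (Real.rpow_nonneg hRpos.le _)
      _ = R ^ M * (R ^ (-δ) * T) := by rw [hRδ]; ring
      _ ≤ R ^ M * (ε / 2) := by
          apply mul_le_mul_of_nonneg_left htail' (Real.rpow_nonneg hRpos.le _)
  have hboundB : ∫ α in B, R ^ α ∂μ ≤ R ^ M * (ε / 2) := by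
    have h1 : ∫ α in B, R ^ α ∂μ ≤ ∫ _ in B, R ^ M ∂μ := by
      refine setIntegral_mono_on (hgintAB.mono_set Set.subset_union_right)
        (integrableOn_const (measure_ne_top μ B)) measurableSet_Ioo ?_
      intro x hx
      exact Real.rpow_le_rpow_of_exponent_le hR1 hx.2.le
    have h2 : ∫ _ in B, R ^ M ∂μ = (μ B).toReal * R ^ M := by
      rw [setIntegral_const, smul_eq_mul, measureReal_def]
    calc ∫ α in B, R ^ α ∂μ ≤ (μ B).toReal * R ^ M := by rw [← h2]; exact h1
      _ ≤ (ε / 2) * R ^ M :=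
          mul_le_mul_of_nonneg_right hδμ (Real.rpow_nonneg hRpos.le _)
      _ = R ^ M * (ε / 2) := by ring
  calc ‖∫ α in Set.Icc (0:ℝ) 1 \ {M}, f α ∂μ‖
      ≤ ∫ α in Set.Icc (0:ℝ) 1 \ {M}, R ^ α ∂μ := hstep1
    _ ≤ ∫ α in A ∪ B ∪ Set.Ioi M, R ^ α ∂μ := hstep2
    _ = (∫ α in A, R ^ α ∂μ) + ∫ α in B, R ^ α ∂μ := by rw [hstep3, hstep4]
    _ ≤ R ^ M * (ε / 2) + R ^ M * (ε / 2) := add_le_add hboundA hboundB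
    _ = ε * R ^ M := by ring
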